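/- Let p ∈ (0,1) and let γ ∈ (max{1,2p}, 2) satisfy γ·ln(2/γ) + (2−γ)·ln(2/(2−γ)) = (2−γ)·ln(1/(1−p)) − (1−γ)·ln(1/p). Then log_{1/p}(2/γ) < 1/2. -/

import Mathlib

open Real Set

/-- Let `p ∈ (0,1)` and let `γ ∈ (max{1,2p}, 2)` satisfy
`γ ln(2/γ) + (2-γ) ln(2/(2-γ)) = (2-γ) ln(1/(1-p)) - (1-γ) ln(1/p)`.
Then `log_{1/p}(2/γ) < 1/2`. -/
theorem stmt4 (p γ : ℝ) (hp0 : 0 < p) (hp1 : p < 1)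
    (hγ : γ ∈ Set.Ioo (max 1 (2 * p)) 2)
    (heq : γ * Real.log (2 / γ) + (2 - γ) * Real.log (2 / (2 - γ)) =
      (2 - γ) * Real.log (1 / (1 - p)) - (1 - γ) * Real.log (1 / p)) :
    Real.logb (1 / p) (2 / γ) < 1 / 2 := by
  obtain ⟨hγ1, hγ2⟩ := hγ
  have hγ1' : 1 < γ := lt_of_le_of_lt (le_max_left _ _) hγ1
  have hγp : 2 * p < γ := lt_of_le_of_lt (le_max_right _ _) hγ1
  have hγ0 : 0 < γ := by linarith
  set s := Real.sqrt p with hs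
  have hs0 : 0 < s := Real.sqrt_pos.mpr hp0
  have hsp : s ^ 2 = p := Real.sq_sqrt hp0.le
  have hs1 : s < 1 := by nlinarith
  have hps : p < s := by nlinarith
  set A := Real.log (1 / (1 - p)) with hA
  set B := Real.log (1 / p) with hB
  have hA' : A = -Real.log (1 - p) := by rw [hA, one_div, Real.log_inv]
  have hB' : B = -Real.log p := by rw [hB, one_div, Real.log_inv]
  set f : ℝ → ℝ := fun x => -(x * Real.log x) - (2 - x) * Real.log (2 - x) + x * (A - B)
    with hf
  -- f is strictly antitone on [2p, 2]
  have hanti : StrictAntiOn f (Icc (2 * p) 2) := by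
    apply strictAntiOn_of_deriv_neg (convex_Icc _ _)
    · apply Continuous.continuousOn
      have h1 : Continuous fun x : ℝ => x * Real.log x := Real.continuous_mul_log
      have h2 : Continuous fun x : ℝ => (2 - x) * Real.log (2 - x) :=
        Real.continuous_mul_log.comp (continuous_const.sub continuous_id)
      exact (h1.neg.sub h2).add (continuous_id.mul continuous_const)
    · intro x hx
      rw [interior_Icc] at hx
      obtain ⟨hx1, hx2⟩ := hx
      have hx0 : 0 < x := by linarith
      have hx2' : 0 < 2 - x := by linarith
      have hd : HasDerivAt f (Real.log (2 - x) - Real.log x + (A - B)) x := by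
        have h1 : HasDerivAt (fun x : ℝ => x * Real.log x) (Real.log x + 1) x :=
          Real.hasDerivAt_mul_log hx0.ne'
        have h2 : HasDerivAt (fun x : ℝ => (2 - x) * Real.log (2 - x))
            (-(Real.log (2 - x) + 1)) x := by
          have hinner : HasDerivAt (fun x : ℝ => 2 - x) (-1) x :=
            (hasDerivAt_id x).const_sub 2
          have := (Real.hasDerivAt_mul_log (x := 2 - x) hx2'.ne').comp x hinner
          refine this.congr_deriv ?_
          ring
        have h3 : HasDerivAt (fun x : ℝ => x * (A - B)) (A - B) x := by
          simpa using (hasDerivAt_id x).mul_const (A - B)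
        have := (h1.neg.sub h2).add h3
        refine this.congr_deriv ?_
        ring
      rw [hd.deriv]
      have hlt : (2 - x) * p < x * (1 - p) := by nlinarith
      have := Real.log_lt_log (by positivity) hlt
      rw [Real.log_mul hx2'.ne' hp0.ne', Real.log_mul hx0.ne' (by linarith : (1:ℝ) - p ≠ 0)]
        at this
      rw [hA', hB']
      linarith
  -- value of f at γ from the equation
  have hfγ : f γ = -2 * Real.log (1 - p) + Real.log p - 2 * Real.log 2 := by
    have e1 : Real.log (2 / γ) = Real.log 2 - Real.log γ := Real.log_div two_ne_zero hγ0.ne'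
    have e2 : Real.log (2 / (2 - γ)) = Real.log 2 - Real.log (2 - γ) :=
      Real.log_div two_ne_zero (by linarith : (2:ℝ) - γ ≠ 0)
    rw [e1, e2, hA', hB'] at heq
    show -(γ * Real.log γ) - (2 - γ) * Real.log (2 - γ) + γ * (A - B) =
      -2 * Real.log (1 - p) + Real.log p - 2 * Real.log 2
    rw [hA', hB']
    linear_combination heq
  -- value of f at 2s
  have hf2s : f (2 * s) = -2 * Real.log 2 + 2 * s * Real.log s - 2 * Real.log (1 - s)
      - 2 * s * Real.log (1 + s) := by
    have e1 : Real.log (2 * s) = Real.log 2 + Real.log s := Real.log_mul two_ne_zero hs0.ne'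
    have e2 : Real.log (2 - 2 * s) = Real.log 2 + Real.log (1 - s) := by
      rw [show (2:ℝ) - 2 * s = 2 * (1 - s) by ring,
        Real.log_mul two_ne_zero (by linarith : (1:ℝ) - s ≠ 0)]
    have e3 : Real.log p = 2 * Real.log s := by
      rw [← hsp, Real.log_pow]; push_cast; ring
    have e4 : Real.log (1 - p) = Real.log (1 - s) + Real.log (1 + s) := by
      rw [show (1:ℝ) - p = (1 - s) * (1 + s) by nlinarith,
        Real.log_mul (by linarith : (1:ℝ) - s ≠ 0) (by linarith : (1:ℝ) + s ≠ 0)]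
    simp only [hf, e1, e2, hA', hB', e3, e4]
    ring
  -- key inequality f(2s) > f(γ)
  have hkey : f γ < f (2 * s) := by
    rw [hfγ, hf2s]
    have e3 : Real.log p = 2 * Real.log s := by
      rw [← hsp, Real.log_pow]; push_cast; ring
    have e4 : Real.log (1 - p) = Real.log (1 - s) + Real.log (1 + s) := by
      rw [show (1:ℝ) - p = (1 - s) * (1 + s) by nlinarith,
        Real.log_mul (by linarith : (1:ℝ) - s ≠ 0) (by linarith : (1:ℝ) + s ≠ 0)]
    rw [e3, e4]
    have hlog : Real.log s < Real.log (1 + s) := Real.log_lt_log hs0 (by linarith)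
    have h5 : 0 < (1 - s) * (Real.log (1 + s) - Real.log s) :=
      mul_pos (by linarith) (by linarith)
    have h6 : (1 - s) * (Real.log (1 + s) - Real.log s) =
        Real.log (1 + s) - Real.log s - s * Real.log (1 + s) + s * Real.log s := by ring
    linarith [h5, h6]
  -- conclude γ > 2s
  have hγs : 2 * s < γ := by
    by_contra h
    push_neg at h
    have hmemγ : γ ∈ Icc (2 * p) 2 := ⟨hγp.le, hγ2.le⟩
    have hmem2s : 2 * s ∈ Icc (2 * p) 2 := ⟨by linarith, by linarith⟩
    rcases lt_or_eq_of_le h with h' | h'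
    · exact absurd (hanti hmemγ hmem2s h') (not_lt.mpr hkey.le)
    · rw [h'] at hkey; exact lt_irrefl _ hkey
  -- finish
  have hlogp : 0 < Real.log (1 / p) := Real.log_pos (by rw [lt_div_iff₀ hp0]; linarith)
  rw [Real.logb, div_lt_iff₀ hlogp]
  have h1 : (2 : ℝ) / γ < 1 / s := by
    rw [div_lt_div_iff₀ hγ0 hs0]
    linarith
  have h2 : Real.log (2 / γ) < Real.log (1 / s) := Real.log_lt_log (by positivity) h1
  have h3 : Real.log (1 / s) = 1 / 2 * Real.log (1 / p) := by
    have e5 : Real.log (1 / p) = 2 * Real.log (1 / s) := by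
      rw [← hsp, one_div, one_div, Real.log_inv, Real.log_inv, Real.log_pow]
      push_cast; ring
    rw [e5]; ring
  linarith
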